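/- Let φ(1), …, φ(M) be independent random variables, each uniformly distributed on {−1, +1}, and let s := Σ_{m=1}^M N_m·φ(m). Then Var(s²) ≤ 2·F₂², where F₂ = Σ_{m=1}^M N_m². -/

import Mathlib

open MeasureTheory ProbabilityTheory Finset

/-- **AMS sketch, variance bound.**
If `φ 1, …, φ M` are independent random signs, each uniform on `{-1, +1}`, and
`s ω = ∑ m, Nm m * φ m ω`, then `Var(s²) ≤ 2·F₂²` where `F₂ = ∑ m, (Nm m)²`. -/
theorem variance_sq_sign_sketch
    {Ω : Type*} [MeasurableSpace Ω] (μ : Measure Ω) [IsProbabilityMeasure μ]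
    (M : ℕ) (Nm : Fin M → ℝ) (φ : Fin M → Ω → ℝ)
    (hmeas : ∀ m, Measurable (φ m))
    (hindep : iIndepFun φ μ)
    (hpos : ∀ m, μ {ω | φ m ω = 1} = 1 / 2)
    (hneg : ∀ m, μ {ω | φ m ω = -1} = 1 / 2) :
    variance (fun ω => (∑ m, Nm m * φ m ω) ^ 2) μ ≤ 2 * (∑ m, Nm m ^ 2) ^ 2 := by
  classical
  -- a.e. each φ m is ±1
  have hpm : ∀ m, ∀ᵐ ω ∂μ, φ m ω = 1 ∨ φ m ω = -1 := by
    intro m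
    have hA : MeasurableSet {ω | φ m ω = 1} := (hmeas m) (measurableSet_singleton 1)
    have hB : MeasurableSet {ω | φ m ω = -1} := (hmeas m) (measurableSet_singleton (-1))
    have hd : Disjoint {ω | φ m ω = 1} {ω | φ m ω = -1} := by
      rw [Set.disjoint_left]
      intro ω h1 h2
      simp only [Set.mem_setOf_eq] at h1 h2
      rw [h1] at h2; norm_num at h2
    have hu : μ ({ω | φ m ω = 1} ∪ {ω | φ m ω = -1}) = 1 := by
      rw [measure_union hd hB, hpos m, hneg m]
      rw [ENNReal.div_add_div_same, one_add_one_eq_two]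
      exact ENNReal.div_self two_ne_zero ENNReal.ofNat_ne_top
    have : μ ({ω | φ m ω = 1} ∪ {ω | φ m ω = -1})ᶜ = 0 := by
      rw [measure_compl (hA.union hB) (measure_ne_top μ _), hu, measure_univ]
      simp
    filter_upwards [measure_eq_zero_iff_ae_notMem.1 this] with ω hω
    simp only [Set.mem_compl_iff, Set.mem_union, Set.mem_setOf_eq, not_not] at hω
    exact hω
  have hsq : ∀ m, ∀ᵐ ω ∂μ, φ m ω ^ 2 = 1 := by
    intro m
    filter_upwards [hpm m] with ω hω
    rcases hω with h | h <;> rw [h] <;> norm_num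
  have hgood : ∀ᵐ ω ∂μ, ∀ m, φ m ω ^ 2 = 1 := ae_all_iff.2 hsq
  have habs : ∀ m, ∀ᵐ ω ∂μ, |φ m ω| ≤ 1 := by
    intro m
    filter_upwards [hpm m] with ω hω
    rcases hω with h | h <;> rw [h] <;> norm_num
  have key : ∀ (f : Ω → ℝ), Measurable f → (∀ᵐ ω ∂μ, |f ω| ≤ 1) → Integrable f μ := by
    intro f hf hb
    exact memLp_one_iff_integrable.1 (MemLp.of_bound hf.aestronglyMeasurable 1
      (by simpa [Real.norm_eq_abs] using hb))
  -- expectation of a single sign is 0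
  have hE : ∀ m, ∫ ω, φ m ω ∂μ = 0 := by
    intro m
    have hA : MeasurableSet {ω | φ m ω = 1} := (hmeas m) (measurableSet_singleton 1)
    have hB : MeasurableSet {ω | φ m ω = -1} := (hmeas m) (measurableSet_singleton (-1))
    have hcong : φ m =ᵐ[μ] fun ω =>
        Set.indicator {ω | φ m ω = 1} (fun _ => (1:ℝ)) ω
        + Set.indicator {ω | φ m ω = -1} (fun _ => (-1:ℝ)) ω := by
      filter_upwards [hpm m] with ω hω
      rcases hω with h | h
      · have hm1 : ω ∈ {ω | φ m ω = 1} := h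
        have h2 : ω ∉ {ω | φ m ω = -1} := by
          simp only [Set.mem_setOf_eq, h]; norm_num
        rw [Set.indicator_of_mem hm1, Set.indicator_of_notMem h2, h]; ring
      · have hm1 : ω ∈ {ω | φ m ω = -1} := h
        have h2 : ω ∉ {ω | φ m ω = 1} := by
          simp only [Set.mem_setOf_eq, h]; norm_num
        rw [Set.indicator_of_mem hm1, Set.indicator_of_notMem h2, h]; ring
    rw [integral_congr_ae hcong, integral_add ((integrable_const (1:ℝ)).indicator hA)
        ((integrable_const (-1:ℝ)).indicator hB),
      integral_indicator_const (1:ℝ) hA, integral_indicator_const (-1:ℝ) hB, measureReal_def, measureReal_def, hpos m, hneg m]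
    norm_num [ENNReal.toReal_div]
  -- expectation of a product of two distinct signs is 0
  have hEpair : ∀ m n, m ≠ n → ∫ ω, φ m ω * φ n ω ∂μ = 0 := by
    intro m n h
    have h2 := (hindep.indepFun h).integral_mul_eq_mul_integral (hmeas m).aestronglyMeasurable
      (hmeas n).aestronglyMeasurable
    calc ∫ ω, φ m ω * φ n ω ∂μ = ∫ ω, (φ m * φ n) ω ∂μ := rfl
      _ = (∫ ω, φ m ω ∂μ) * ∫ ω, φ n ω ∂μ := h2
      _ = 0 := by rw [hE m]; ring
  -- expectation of a product of four signs with some index appearing exactly once is 0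
  have hquad : ∀ a b x y : Fin M, a ≠ b → x ≠ y → ¬(a = x ∧ b = y) → ¬(a = y ∧ b = x) →
      ∫ ω, (φ a ω * φ b ω) * (φ x ω * φ y ω) ∂μ = 0 := by
    intro a b x y hab hxy hc1 hc2
    by_cases hax : a = x
    · subst hax
      have hby : b ≠ y := fun h => hc1 ⟨rfl, h⟩
      have heq : (fun ω => (φ a ω * φ b ω) * (φ a ω * φ y ω)) =ᵐ[μ]
          fun ω => φ b ω * φ y ω := by
        filter_upwards [hsq a] with ω hω
        have h3 : (φ a ω * φ b ω) * (φ a ω * φ y ω) = φ a ω ^ 2 * (φ b ω * φ y ω) := by ring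
        rw [h3, hω, one_mul]
      rw [integral_congr_ae heq]; exact hEpair b y hby
    by_cases hay : a = y
    · subst hay
      have hbx : b ≠ x := fun h => hc2 ⟨rfl, h⟩
      have heq : (fun ω => (φ a ω * φ b ω) * (φ x ω * φ a ω)) =ᵐ[μ]
          fun ω => φ b ω * φ x ω := by
        filter_upwards [hsq a] with ω hω
        have h3 : (φ a ω * φ b ω) * (φ x ω * φ a ω) = φ a ω ^ 2 * (φ b ω * φ x ω) := by ring
        rw [h3, hω, one_mul]
      rw [integral_congr_ae heq]; exact hEpair b x hbx
    by_cases hbx : b = x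
    · subst hbx
      have heq : (fun ω => (φ a ω * φ b ω) * (φ b ω * φ y ω)) =ᵐ[μ]
          fun ω => φ a ω * φ y ω := by
        filter_upwards [hsq b] with ω hω
        have h3 : (φ a ω * φ b ω) * (φ b ω * φ y ω) = φ b ω ^ 2 * (φ a ω * φ y ω) := by ring
        rw [h3, hω, one_mul]
      rw [integral_congr_ae heq]; exact hEpair a y hay
    by_cases hby : b = y
    · subst hby
      have heq : (fun ω => (φ a ω * φ b ω) * (φ x ω * φ b ω)) =ᵐ[μ]
          fun ω => φ a ω * φ x ω := by
        filter_upwards [hsq b] with ω hω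
        have h3 : (φ a ω * φ b ω) * (φ x ω * φ b ω) = φ b ω ^ 2 * (φ a ω * φ x ω) := by ring
        rw [h3, hω, one_mul]
      rw [integral_congr_ae heq]; exact hEpair a x hax
    -- all four distinct
    · have hmem : a ∉ ({b, x, y} : Finset (Fin M)) := by
        simp [hab, hax, hay]
      have hip := hindep.indepFun_finsetProd_of_notMem hmeas hmem
      have hPm : Measurable (∏ j ∈ ({b, x, y} : Finset (Fin M)), φ j) := by
        have := Finset.measurable_prod ({b, x, y} : Finset (Fin M)) fun i _ => hmeas i
        simpa [funext fun a => (Finset.prod_apply a _ φ).symm] using this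
      have h4 := hip.integral_mul_eq_mul_integral hPm.aestronglyMeasurable (hmeas a).aestronglyMeasurable
      have hfun : (fun ω => (φ a ω * φ b ω) * (φ x ω * φ y ω)) =
          (∏ j ∈ ({b, x, y} : Finset (Fin M)), φ j) * φ a := by
        funext ω
        have hx1 : x ∉ ({y} : Finset (Fin M)) := by simp [hxy]
        have hb1 : b ∉ ({x, y} : Finset (Fin M)) := by simp [hbx, hby]
        simp only [Pi.mul_apply, Finset.prod_apply, Finset.prod_insert hb1,
          Finset.prod_insert hx1, Finset.prod_singleton]
        ring
      rw [hfun, h4, hE a, mul_zero]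
  -- notation
  set D : Finset (Fin M × Fin M) := Finset.univ.offDiag with hD
  set c : Fin M × Fin M → ℝ := fun p => Nm p.1 * Nm p.2 with hc
  set X : Fin M × Fin M → Ω → ℝ := fun p ω => φ p.1 ω * φ p.2 ω with hX
  set F2 : ℝ := ∑ m, Nm m ^ 2 with hF2
  set T : Ω → ℝ := fun ω => ∑ p ∈ D, c p * X p ω with hT
  have hXmeas : ∀ p : Fin M × Fin M, Measurable (X p) := fun p => (hmeas p.1).mul (hmeas p.2)
  have habsX : ∀ p : Fin M × Fin M, ∀ᵐ ω ∂μ, |X p ω| ≤ 1 := by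
    intro p
    filter_upwards [habs p.1, habs p.2] with ω h1 h2
    simp only [hX]
    rw [abs_mul]
    nlinarith [abs_nonneg (φ p.1 ω), abs_nonneg (φ p.2 ω)]
  have hXint : ∀ p, Integrable (X p) μ := fun p => key _ (hXmeas p) (habsX p)
  have hXXint : ∀ p q, Integrable (fun ω => X p ω * X q ω) μ := by
    intro p q
    refine key _ ((hXmeas p).mul (hXmeas q)) ?_
    filter_upwards [habsX p, habsX q] with ω h1 h2
    rw [abs_mul]
    nlinarith [abs_nonneg (X p ω), abs_nonneg (X q ω)]
  have hTint : Integrable T μ := by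
    rw [hT]
    exact integrable_finset_sum D fun p _ => (hXint p).const_mul (c p)
  have hET : ∫ ω, T ω ∂μ = 0 := by
    simp only [hT]
    rw [integral_finset_sum D fun p _ => (hXint p).const_mul (c p)]
    refine Finset.sum_eq_zero fun p hp => ?_
    rw [integral_const_mul]
    have hne : p.1 ≠ p.2 := (Finset.mem_offDiag.1 hp).2.2
    have h0 : ∫ ω, X p ω ∂μ = 0 := by
      simp only [hX]; exact hEpair p.1 p.2 hne
    rw [h0, mul_zero]
  have hIself : ∀ p : Fin M × Fin M, ∫ ω, X p ω * X p ω ∂μ = 1 := by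
    intro p
    have heq : (fun ω => X p ω * X p ω) =ᵐ[μ] fun _ => (1 : ℝ) := by
      filter_upwards [hsq p.1, hsq p.2] with ω h1 h2
      simp only [hX]
      have h3 : (φ p.1 ω * φ p.2 ω) * (φ p.1 ω * φ p.2 ω) = φ p.1 ω ^ 2 * φ p.2 ω ^ 2 := by ring
      rw [h3, h1, h2, one_mul]
    rw [integral_congr_ae heq, integral_const]; simp
  have hIswap : ∀ p : Fin M × Fin M, ∫ ω, X p ω * X (p.2, p.1) ω ∂μ = 1 := by
    intro p
    have heq : (fun ω => X p ω * X (p.2, p.1) ω) =ᵐ[μ] fun _ => (1 : ℝ) := by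
      filter_upwards [hsq p.1, hsq p.2] with ω h1 h2
      simp only [hX]
      have h3 : (φ p.1 ω * φ p.2 ω) * (φ p.2 ω * φ p.1 ω) = φ p.1 ω ^ 2 * φ p.2 ω ^ 2 := by ring
      rw [h3, h1, h2, one_mul]
    rw [integral_congr_ae heq, integral_const]; simp
  have hTT : (fun ω => T ω * T ω)
      = fun ω => ∑ p ∈ D, ∑ q ∈ D, (c p * c q) * (X p ω * X q ω) := by
    funext ω
    simp only [hT]
    rw [Finset.sum_mul_sum]
    exact Finset.sum_congr rfl fun p _ => Finset.sum_congr rfl fun q _ => by ring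
  have hTTint : Integrable (fun ω => T ω * T ω) μ := by
    rw [hTT]
    exact integrable_finset_sum D fun p _ =>
      integrable_finset_sum D fun q _ => (hXXint p q).const_mul _
  have hET2 : ∫ ω, T ω * T ω ∂μ = 2 * ∑ p ∈ D, c p ^ 2 := by
    have hinner : ∀ p ∈ D, ∑ q ∈ D, (c p * c q) * ∫ ω, X p ω * X q ω ∂μ = 2 * c p ^ 2 := by
      intro p hp
      have hp12 : p.1 ≠ p.2 := (Finset.mem_offDiag.1 hp).2.2
      have hswapD : (p.2, p.1) ∈ D :=
        Finset.mem_offDiag.2 ⟨Finset.mem_univ _, Finset.mem_univ _, hp12.symm⟩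
      have hpair : ({p, (p.2, p.1)} : Finset (Fin M × Fin M)) ⊆ D := by
        intro q hq
        rcases Finset.mem_insert.1 hq with h | h
        · rw [h]; exact hp
        · rw [Finset.mem_singleton.1 h]; exact hswapD
      have hzero : ∀ q ∈ D, q ∉ ({p, (p.2, p.1)} : Finset (Fin M × Fin M)) →
          (c p * c q) * ∫ ω, X p ω * X q ω ∂μ = 0 := by
        intro q hq hnq
        have hq12 : q.1 ≠ q.2 := (Finset.mem_offDiag.1 hq).2.2
        simp only [Finset.mem_insert, Finset.mem_singleton, not_or] at hnq
        have h1 : ¬(p.1 = q.1 ∧ p.2 = q.2) := by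
          rintro ⟨u, v⟩
          exact hnq.1 (Prod.ext u.symm v.symm)
        have h2 : ¬(p.1 = q.2 ∧ p.2 = q.1) := by
          rintro ⟨u, v⟩
          exact hnq.2 (Prod.ext v.symm u.symm)
        have h0 : ∫ ω, X p ω * X q ω ∂μ = 0 := by
          simp only [hX]
          exact hquad p.1 p.2 q.1 q.2 hp12 hq12 h1 h2
        rw [h0, mul_zero]
      rw [← Finset.sum_subset hpair hzero]
      have hpp : p ≠ (p.2, p.1) := by
        intro h
        exact hp12 (by rw [Prod.ext_iff] at h; exact h.1)
      rw [Finset.sum_pair hpp, hIself p, hIswap p]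
      have hcs : c (p.2, p.1) = c p := mul_comm _ _
      rw [hcs]; ring
    calc ∫ ω, T ω * T ω ∂μ
        = ∫ ω, (∑ p ∈ D, ∑ q ∈ D, (c p * c q) * (X p ω * X q ω)) ∂μ := by rw [hTT]
      _ = ∑ p ∈ D, ∫ ω, (∑ q ∈ D, (c p * c q) * (X p ω * X q ω)) ∂μ :=
          integral_finset_sum _ fun p _ =>
            integrable_finset_sum _ fun q _ => (hXXint p q).const_mul _
      _ = ∑ p ∈ D, ∑ q ∈ D, ∫ ω, (c p * c q) * (X p ω * X q ω) ∂μ :=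
          Finset.sum_congr rfl fun p _ =>
            integral_finset_sum _ fun q _ => (hXXint p q).const_mul _
      _ = ∑ p ∈ D, ∑ q ∈ D, (c p * c q) * ∫ ω, X p ω * X q ω ∂μ := by
          exact Finset.sum_congr rfl fun p _ => Finset.sum_congr rfl fun q _ =>
            integral_const_mul _ _
      _ = ∑ p ∈ D, 2 * c p ^ 2 := Finset.sum_congr rfl hinner
      _ = 2 * ∑ p ∈ D, c p ^ 2 := by rw [Finset.mul_sum]
  -- a.e. identity s² = F2 + T
  have hs2 : (fun ω => (∑ m, Nm m * φ m ω) ^ 2) =ᵐ[μ] fun ω => F2 + T ω := by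
    filter_upwards [hgood] with ω hω
    have h1 : (∑ m, Nm m * φ m ω) ^ 2
        = ∑ p ∈ Finset.univ ×ˢ Finset.univ, c p * X p ω := by
      simp only [hc, hX]
      rw [sq, Finset.sum_mul_sum, Finset.sum_product]
      exact Finset.sum_congr rfl fun i _ => Finset.sum_congr rfl fun j _ => by ring
    have h2 : ∑ p ∈ Finset.univ ×ˢ Finset.univ, c p * X p ω = F2 + T ω := by
      rw [← Finset.diag_union_offDiag (Finset.univ : Finset (Fin M)),
        Finset.sum_union (Finset.disjoint_diag_offDiag _), Finset.sum_diag]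
      simp only [hF2, hT, hD, hc, hX]
      congr 1
      refine Finset.sum_congr rfl fun m _ => ?_
      have h3 : Nm m * Nm m * (φ m ω * φ m ω) = Nm m ^ 2 * φ m ω ^ 2 := by ring
      rw [h3, hω m, mul_one]
    rw [h1, h2]
  -- Memℒp of s²
  have hSmeas : Measurable fun ω => ∑ m, Nm m * φ m ω :=
    Finset.measurable_sum _ fun m _ => (hmeas m).const_mul _
  have hgoodAbs : ∀ᵐ ω ∂μ, ∀ m, |φ m ω| ≤ 1 := ae_all_iff.2 habs
  have hmem : MemLp (fun ω => (∑ m, Nm m * φ m ω) ^ 2) 2 μ := by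
    refine MemLp.of_bound (hSmeas.pow_const 2).aestronglyMeasurable
      ((∑ m, |Nm m|) ^ 2) ?_
    filter_upwards [hgoodAbs] with ω hω
    have hb : |∑ m, Nm m * φ m ω| ≤ ∑ m, |Nm m| := by
      refine (Finset.abs_sum_le_sum_abs _ _).trans ?_
      refine Finset.sum_le_sum fun m _ => ?_
      rw [abs_mul]
      calc |Nm m| * |φ m ω| ≤ |Nm m| * 1 :=
            mul_le_mul_of_nonneg_left (hω m) (abs_nonneg _)
        _ = |Nm m| := mul_one _
    rw [Real.norm_eq_abs, abs_pow]
    exact pow_le_pow_left₀ (abs_nonneg _) hb 2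
  -- the two integrals
  have hint1 : ∫ ω, (∑ m, Nm m * φ m ω) ^ 2 ∂μ = F2 := by
    rw [integral_congr_ae hs2, integral_add (integrable_const F2) hTint,
      integral_const, hET, add_zero]
    simp
  have hint2 : ∫ ω, ((∑ m, Nm m * φ m ω) ^ 2) ^ 2 ∂μ = F2 ^ 2 + 2 * ∑ p ∈ D, c p ^ 2 := by
    have hcong2 : (fun ω => ((∑ m, Nm m * φ m ω) ^ 2) ^ 2) =ᵐ[μ]
        fun ω => F2 ^ 2 + (2 * F2 * T ω + T ω * T ω) := by
      filter_upwards [hs2] with ω hω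
      rw [hω]; ring
    have hadd : Integrable (fun a => 2 * F2 * T a + T a * T a) μ :=
      (hTint.const_mul (2 * F2)).add hTTint
    have hcm : Integrable (fun a => 2 * F2 * T a) μ := hTint.const_mul (2 * F2)
    rw [integral_congr_ae hcong2, integral_add (integrable_const _) hadd,
      integral_add hcm hTTint, integral_const, integral_const_mul, hET,
      hET2, mul_zero, zero_add]
    simp
  -- variance computation
  have hvar : variance (fun ω => (∑ m, Nm m * φ m ω) ^ 2) μ = 2 * ∑ p ∈ D, c p ^ 2 := by
    rw [variance_eq_sub hmem]
    have e1 : μ[(fun ω => (∑ m, Nm m * φ m ω) ^ 2) ^ 2]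
        = ∫ ω, ((∑ m, Nm m * φ m ω) ^ 2) ^ 2 ∂μ := by
      congr 1
    rw [e1, hint2, hint1]
    ring
  rw [hvar]
  have hF2sq : F2 ^ 2 = ∑ p ∈ Finset.univ ×ˢ Finset.univ, c p ^ 2 := by
    simp only [hF2, hc]
    rw [sq, Finset.sum_mul_sum, Finset.sum_product]
    exact Finset.sum_congr rfl fun i _ => Finset.sum_congr rfl fun j _ => by ring
  rw [hF2sq]
  have hsub : D ⊆ Finset.univ ×ˢ Finset.univ := by
    rw [hD]
    intro p hp
    exact Finset.mem_product.2 ⟨Finset.mem_univ _, Finset.mem_univ _⟩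
  have hle := Finset.sum_le_sum_of_subset_of_nonneg hsub fun p _ _ => sq_nonneg (c p)
  linarith
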